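/- If a sequence {a_n} of positive real numbers is locally Benford distributed of order k for every positive integer k, then {a_n} has Benford distributed waiting times. -/

import Mathlib

open Filter

/-- `x` has leading digit `d` in base 10: `d·10^k ≤ x < (d+1)·10^k` for some integer `k`. -/
def HasLeadingDigit (x : ℝ) (d : ℕ) : Prop :=
  ∃ k : ℤ, (d : ℝ) * 10 ^ k ≤ x ∧ x < ((d : ℝ) + 1) * 10 ^ k

/-- The Benford frequency `P(d) = log₁₀ (1 + 1/d)` of digit `d`. -/
noncomputable def benfordP (d : ℕ) : ℝ := Real.logb 10 (1 + 1 / (d : ℝ))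

/-- A sequence is Benford distributed if for each digit `d ∈ {1,…,9}` the density of
indices `n` with `D(a_n) = d` equals `P(d)`. -/
def BenfordDistributed (a : ℕ → ℝ) : Prop :=
  ∀ d : ℕ, 1 ≤ d → d ≤ 9 →
    Tendsto
      (fun N : ℕ =>
        (Nat.card {n : ℕ | 1 ≤ n ∧ n ≤ N ∧ HasLeadingDigit (a n) d} : ℝ) / N)
      atTop (nhds (benfordP d))

/-- A sequence is locally Benford distributed of order `k` if every `k`-tuple of digits
in `{1,…,9}` occurs among leading digits of `k` consecutive terms with density
`P(d₀)⋯P(d_{k-1})`. -/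
def LocallyBenfordDistributed (a : ℕ → ℝ) (k : ℕ) : Prop :=
  ∀ d : Fin k → ℕ, (∀ i, 1 ≤ d i ∧ d i ≤ 9) →
    Tendsto
      (fun N : ℕ =>
        (Nat.card {n : ℕ | 1 ≤ n ∧ n ≤ N ∧
            ∀ i : Fin k, HasLeadingDigit (a (n + (i : ℕ))) (d i)} : ℝ) / N)
      atTop (nhds (∏ i : Fin k, benfordP (d i)))

/-- `waitingTime a d i` is the waiting time `w_i(d) = n_{i+1}^{(d)} - n_i^{(d)}`, where
`n_1^{(d)} < n_2^{(d)} < ⋯` enumerates `{n ∈ ℕ, n ≥ 1 : D(a_n) = d}`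
(the `j`-th element of this set, 1-indexed, being `Nat.nth · (j-1)`). -/
noncomputable def waitingTime (a : ℕ → ℝ) (d : ℕ) (i : ℕ) : ℕ :=
  Nat.nth (fun n => 1 ≤ n ∧ HasLeadingDigit (a n) d) i -
    Nat.nth (fun n => 1 ≤ n ∧ HasLeadingDigit (a n) d) (i - 1)

/-- A sequence has Benford distributed waiting times if for each digit `d ∈ {1,…,9}`
the waiting times between occurrences of leading digit `d` take value `k` with density
`P(d)(1-P(d))^{k-1}`. -/
def BenfordWaitingTimes (a : ℕ → ℝ) : Prop :=
  ∀ d : ℕ, 1 ≤ d → d ≤ 9 → ∀ k : ℕ, 1 ≤ k →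
    Tendsto
      (fun N : ℕ =>
        (Nat.card {i : ℕ | 1 ≤ i ∧ i ≤ N ∧ waitingTime a d i = k} : ℝ) / N)
      atTop (nhds (benfordP d * (1 - benfordP d) ^ (k - 1)))

/-- A sequence `u` of real numbers is uniformly distributed modulo 1. -/
def UniformlyDistributedMod1 (u : ℕ → ℝ) : Prop :=
  ∀ t : ℝ, 0 ≤ t → t ≤ 1 →
    Tendsto
      (fun N : ℕ =>
        (Nat.card {n : ℕ | 1 ≤ n ∧ n ≤ N ∧ Int.fract (u n) ≤ t} : ℝ) / N)
      atTop (nhds t)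

/-- `nthPrime n` is the `n`-th prime (1-indexed): `nthPrime 1 = 2`, `nthPrime 2 = 3`, … -/
noncomputable def nthPrime (n : ℕ) : ℕ := Nat.nth Nat.Prime (n - 1)

lemma digit_unique_aux {x : ℝ} {d e : ℕ} (hd9 : d ≤ 9) (he1 : 1 ≤ e)
    {k k' : ℤ} (hkk : k < k') (h1 : x < ((d : ℝ) + 1) * 10 ^ k)
    (h2 : (e : ℝ) * 10 ^ k' ≤ x) : False := by
  have h10 : (0:ℝ) < (10:ℝ) ^ k := zpow_pos (by norm_num) _
  have hd : ((d : ℝ) + 1) ≤ 10 := by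
    have : (d : ℝ) ≤ 9 := by exact_mod_cast hd9
    linarith
  have hx1 : x < (10:ℝ) ^ (k+1) := by
    calc x < ((d : ℝ) + 1) * 10 ^ k := h1
    _ ≤ 10 * 10 ^ k := by nlinarith
    _ = (10:ℝ) ^ (k+1) := by rw [zpow_add_one₀ (by norm_num : (10:ℝ) ≠ 0)]; ring
  have hx2 : (10:ℝ) ^ (k+1) ≤ x := by
    calc (10:ℝ) ^ (k+1) ≤ (10:ℝ) ^ k' := by
          apply zpow_le_zpow_right₀ (by norm_num) (by omega)
    _ ≤ (e : ℝ) * 10 ^ k' := by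
          have : (1:ℝ) ≤ (e:ℝ) := by exact_mod_cast he1
          nlinarith [zpow_pos (show (0:ℝ) < 10 by norm_num) k']
    _ ≤ x := h2
  linarith

lemma digit_unique {x : ℝ} {d e : ℕ} (hd1 : 1 ≤ d) (hd9 : d ≤ 9)
    (he1 : 1 ≤ e) (he9 : e ≤ 9)
    (hd : HasLeadingDigit x d) (he : HasLeadingDigit x e) : d = e := by
  obtain ⟨k, hk1, hk2⟩ := hd
  obtain ⟨k', hk1', hk2'⟩ := he
  have hkk : k = k' := by
    rcases lt_trichotomy k k' with h | h | h
    · exact absurd (digit_unique_aux hd9 he1 h hk2 hk1') (by simp)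
    · exact h
    · exact absurd (digit_unique_aux he9 hd1 h hk2' hk1) (by simp)
  subst hkk
  have h10 : (0:ℝ) < (10:ℝ) ^ k := zpow_pos (by norm_num) _
  by_contra hne
  rcases Nat.lt_or_ge d e with h | h
  · have : (d : ℝ) + 1 ≤ (e : ℝ) := by exact_mod_cast h
    nlinarith
  · have he' : e < d := lt_of_le_of_ne h (by omega)
    have : (e : ℝ) + 1 ≤ (d : ℝ) := by exact_mod_cast he'
    nlinarith

open Classical in
noncomputable def theDigit (x : ℝ) : ℕ :=
  if h : ∃ d, 1 ≤ d ∧ d ≤ 9 ∧ HasLeadingDigit x d then h.choose else 1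

lemma digit_exists {x : ℝ} (hx : 0 < x) : ∃ d, 1 ≤ d ∧ d ≤ 9 ∧ HasLeadingDigit x d := by
  obtain ⟨k, hk1, hk2⟩ := exists_mem_Ico_zpow hx (show (1:ℝ) < 10 by norm_num)
  have h10 : (0:ℝ) < (10:ℝ) ^ k := zpow_pos (by norm_num) _
  set y : ℝ := x / 10 ^ k with hy
  have hy1 : (1:ℝ) ≤ y := (one_le_div h10).2 hk1
  have hy10 : y < 10 := by
    rw [hy, div_lt_iff₀ h10]
    calc x < (10:ℝ) ^ (k+1) := hk2
    _ = 10 * 10 ^ k := by rw [zpow_add_one₀ (by norm_num : (10:ℝ) ≠ 0)]; ring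
  have hfl : (1:ℤ) ≤ ⌊y⌋ := by exact_mod_cast Int.le_floor.2 (by exact_mod_cast hy1)
  have hfu : ⌊y⌋ < 10 := Int.floor_lt.2 (by exact_mod_cast hy10)
  have hcast : ((⌊y⌋.toNat : ℕ) : ℝ) = (⌊y⌋ : ℝ) := by
    exact_mod_cast congrArg (Int.cast : ℤ → ℝ) (Int.toNat_of_nonneg (by omega))
  refine ⟨⌊y⌋.toNat, by omega, by omega, k, ?_, ?_⟩
  · rw [hcast]
    calc (⌊y⌋ : ℝ) * 10 ^ k ≤ y * 10 ^ k := by nlinarith [Int.floor_le y]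
    _ = x := div_mul_cancel₀ x h10.ne' 
  · rw [hcast]
    have := Int.lt_floor_add_one y
    calc x = y * 10 ^ k := (div_mul_cancel₀ x h10.ne').symm
    _ < ((⌊y⌋:ℝ) + 1) * 10 ^ k := by nlinarith

lemma theDigit_spec {x : ℝ} (hx : 0 < x) :
    1 ≤ theDigit x ∧ theDigit x ≤ 9 ∧ HasLeadingDigit x (theDigit x) := by
  rw [theDigit, dif_pos (digit_exists hx)]
  exact (digit_exists hx).choose_spec

lemma hasLeadingDigit_iff_theDigit {x : ℝ} (hx : 0 < x) {d : ℕ} (hd1 : 1 ≤ d) (hd9 : d ≤ 9) :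
    HasLeadingDigit x d ↔ theDigit x = d := by
  obtain ⟨h1, h9, hdig⟩ := theDigit_spec hx
  constructor
  · intro h; exact digit_unique h1 h9 hd1 hd9 hdig h
  · intro h; rwa [h] at hdig

lemma benfordP_pos {d : ℕ} (hd : 1 ≤ d) : 0 < benfordP d := by
  apply Real.logb_pos (by norm_num)
  have : (0:ℝ) < 1 / (d:ℝ) := by positivity
  linarith

lemma benfordP_lt_one {d : ℕ} (hd : 1 ≤ d) : benfordP d < 1 := by
  have h1 : (1:ℝ) ≤ (d:ℝ) := by exact_mod_cast hd
  have : (1:ℝ) + 1 / (d:ℝ) ≤ 2 := by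
    have : 1 / (d:ℝ) ≤ 1 := by
      rw [div_le_one (by linarith)]; linarith
    linarith
  calc benfordP d ≤ Real.logb 10 2 :=
        Real.logb_le_logb_of_le (by norm_num) (by positivity) (by linarith)
  _ < 1 := by
      rw [show (1:ℝ) = Real.logb 10 10 by simp]
      exact Real.logb_lt_logb (by norm_num) (by norm_num) (by norm_num)

lemma benfordP_sum : ∑ e ∈ Finset.Icc 1 9, benfordP e = 1 := by
  have : Finset.Icc (1:ℕ) 9 = {1,2,3,4,5,6,7,8,9} := by decide
  rw [this]
  simp only [Finset.sum_insert, Finset.mem_insert, Finset.mem_singleton, benfordP]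
  norm_num [Finset.sum_insert, Finset.mem_insert]
  rw [← Real.logb_mul (by norm_num) (by norm_num), ← Real.logb_mul (by norm_num) (by norm_num),
    ← Real.logb_mul (by norm_num) (by norm_num), ← Real.logb_mul (by norm_num) (by norm_num),
    ← Real.logb_mul (by norm_num) (by norm_num), ← Real.logb_mul (by norm_num) (by norm_num),
    ← Real.logb_mul (by norm_num) (by norm_num), ← Real.logb_mul (by norm_num) (by norm_num)]
  norm_num

lemma benfordP_sum_erase {d : ℕ} (hd1 : 1 ≤ d) (hd9 : d ≤ 9) :
    ∑ e ∈ (Finset.Icc 1 9).erase d, benfordP e = 1 - benfordP d := by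
  have hmem : d ∈ Finset.Icc 1 9 := Finset.mem_Icc.2 ⟨hd1, hd9⟩
  have := Finset.add_sum_erase _ benfordP hmem
  rw [benfordP_sum] at this
  linarith

lemma card_setOf_eq (N : ℕ) (Q : ℕ → Prop) [DecidablePred Q] :
    Nat.card {n : ℕ | 1 ≤ n ∧ n ≤ N ∧ Q n} = ((Finset.Icc 1 N).filter Q).card := by
  have : {n : ℕ | 1 ≤ n ∧ n ≤ N ∧ Q n} = ↑((Finset.Icc 1 N).filter Q) := by
    ext n; simp [Finset.mem_filter, Finset.mem_Icc, and_assoc]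
  rw [this, Nat.card_coe_set_eq, Set.ncard_coe_finset]

def GapProp (a : ℕ → ℝ) (d m : ℕ) (n : ℕ) : Prop :=
  HasLeadingDigit (a n) d ∧ (∀ j, 1 ≤ j → j ≤ m → ¬ HasLeadingDigit (a (n + j)) d) ∧
    HasLeadingDigit (a (n + (m + 1))) d

def digitSets (d m : ℕ) : Fin (m + 2) → Finset ℕ :=
  fun i => if (i : ℕ) = 0 ∨ (i : ℕ) = m + 1 then {d} else (Finset.Icc 1 9).erase d

lemma digitSets_of_cond {d m : ℕ} {i : Fin (m + 2)} (h : (i : ℕ) = 0 ∨ (i : ℕ) = m + 1) :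
    digitSets d m i = {d} := if_pos h

lemma digitSets_of_mid {d m : ℕ} {i : Fin (m + 2)} (h : ¬((i : ℕ) = 0 ∨ (i : ℕ) = m + 1)) :
    digitSets d m i = (Finset.Icc 1 9).erase d := if_neg h

lemma digitSets_subset {d m : ℕ} (hd1 : 1 ≤ d) (hd9 : d ≤ 9) (i : Fin (m + 2)) :
    digitSets d m i ⊆ Finset.Icc 1 9 := by
  intro x hx
  by_cases hcond : (i : ℕ) = 0 ∨ (i : ℕ) = m + 1
  · rw [digitSets_of_cond hcond, Finset.mem_singleton] at hx
    subst hx; exact Finset.mem_Icc.2 ⟨hd1, hd9⟩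
  · rw [digitSets_of_mid hcond] at hx
    exact Finset.mem_of_mem_erase hx

open Classical in
lemma gap_density (a : ℕ → ℝ) (hpos : ∀ n : ℕ, 1 ≤ n → 0 < a n)
    (h : ∀ k : ℕ, 1 ≤ k → LocallyBenfordDistributed a k)
    {d : ℕ} (hd1 : 1 ≤ d) (hd9 : d ≤ 9) (m : ℕ) :
    Tendsto (fun N : ℕ => (((Finset.Icc 1 N).filter (GapProp a d m)).card : ℝ) / N)
      atTop (nhds (benfordP d ^ 2 * (1 - benfordP d) ^ m)) := by
  classical
  set F : Finset (Fin (m + 2) → ℕ) := Fintype.piFinset (digitSets d m) with hF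
  have hbound : ∀ e ∈ F, ∀ i, 1 ≤ e i ∧ e i ≤ 9 := by
    intro e he i
    exact Finset.mem_Icc.1 (digitSets_subset hd1 hd9 i (Fintype.mem_piFinset.1 he i))
  -- the partition of the gap set
  have hpart : ∀ N : ℕ, (Finset.Icc 1 N).filter (GapProp a d m) =
      F.biUnion (fun e => (Finset.Icc 1 N).filter
        (fun n => ∀ i : Fin (m + 2), HasLeadingDigit (a (n + (i : ℕ))) (e i))) := by
    intro N
    ext n
    simp only [Finset.mem_biUnion, Finset.mem_filter]
    constructor
    · rintro ⟨hn, hg1, hg2, hg3⟩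
      have hn1 : 1 ≤ n := (Finset.mem_Icc.1 hn).1
      refine ⟨fun i => if (i : ℕ) = 0 ∨ (i : ℕ) = m + 1 then d
        else theDigit (a (n + (i : ℕ))), ?_, hn, ?_⟩
      · rw [hF, Fintype.mem_piFinset]
        intro i
        by_cases hcond : (i : ℕ) = 0 ∨ (i : ℕ) = m + 1
        · rw [if_pos hcond, digitSets_of_cond hcond]
          exact Finset.mem_singleton_self d
        · rw [if_neg hcond, digitSets_of_mid hcond]
          have hiv : 1 ≤ (i : ℕ) ∧ (i : ℕ) ≤ m := by
            have := i.isLt; push_neg at hcond; omega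
          have hxpos : 0 < a (n + (i : ℕ)) := hpos _ (by omega)
          obtain ⟨h1, h9, hdig⟩ := theDigit_spec hxpos
          rw [Finset.mem_erase]
          refine ⟨?_, Finset.mem_Icc.2 ⟨h1, h9⟩⟩
          intro heq
          exact hg2 _ hiv.1 hiv.2 (heq ▸ hdig)
      · intro i
        by_cases hcond : (i : ℕ) = 0 ∨ (i : ℕ) = m + 1
        · simp only [if_pos hcond]
          rcases hcond with h0 | hlast
          · rw [h0, Nat.add_zero]; exact hg1
          · rw [hlast]; exact hg3
        · simp only [if_neg hcond]
          have hxpos : 0 < a (n + (i : ℕ)) := by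
            have := i.isLt; push_neg at hcond
            exact hpos _ (by omega)
          exact (theDigit_spec hxpos).2.2
    · rintro ⟨e, heF, hn, htup⟩
      have hn1 : 1 ≤ n := (Finset.mem_Icc.1 hn).1
      have hmem : ∀ i : Fin (m + 2), e i ∈ digitSets d m i := Fintype.mem_piFinset.1 heF
      refine ⟨hn, ?_, ?_, ?_⟩
      · have h0 := hmem 0
        rw [digitSets_of_cond (Or.inl rfl), Finset.mem_singleton] at h0
        have := htup 0
        rw [Fin.val_zero, Nat.add_zero, h0] at this
        exact this
      · intro j hj1 hjm hdig
        have hci := hmem ⟨j, by omega⟩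
        rw [digitSets_of_mid (by simp; omega), Finset.mem_erase, Finset.mem_Icc] at hci
        have htj := htup ⟨j, by omega⟩
        have : e ⟨j, by omega⟩ = d :=
          digit_unique hci.2.1 hci.2.2 hd1 hd9 htj hdig
        exact hci.1 this
      · have hci := hmem ⟨m + 1, by omega⟩
        rw [digitSets_of_cond (Or.inr rfl), Finset.mem_singleton] at hci
        have := htup ⟨m + 1, by omega⟩
        rw [hci] at this
        exact this
  -- pairwise disjoint
  have hdisj : ∀ N : ℕ, ∀ e ∈ F, ∀ e' ∈ F, e ≠ e' →
      Disjoint ((Finset.Icc 1 N).filter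
          (fun n => ∀ i : Fin (m + 2), HasLeadingDigit (a (n + (i : ℕ))) (e i)))
        ((Finset.Icc 1 N).filter
          (fun n => ∀ i : Fin (m + 2), HasLeadingDigit (a (n + (i : ℕ))) (e' i))) := by
    intro N e he e' he' hne
    rw [Finset.disjoint_left]
    rintro n hn hn'
    apply hne
    funext i
    obtain ⟨_, ht⟩ := Finset.mem_filter.1 hn
    obtain ⟨_, ht'⟩ := Finset.mem_filter.1 hn'
    exact digit_unique (hbound e he i).1 (hbound e he i).2
      (hbound e' he' i).1 (hbound e' he' i).2 (ht i) (ht' i)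
  -- rewrite the function as a finite sum and take limits
  have heq : (fun N : ℕ => (((Finset.Icc 1 N).filter (GapProp a d m)).card : ℝ) / N) =
      fun N : ℕ => ∑ e ∈ F, (((Finset.Icc 1 N).filter
        (fun n => ∀ i : Fin (m + 2), HasLeadingDigit (a (n + (i : ℕ))) (e i))).card : ℝ) / N := by
    funext N
    rw [hpart N, Finset.card_biUnion (hdisj N)]
    push_cast
    rw [Finset.sum_div]
  rw [heq]
  have hlim : ∀ e ∈ F, Tendsto (fun N : ℕ => (((Finset.Icc 1 N).filter
      (fun n => ∀ i : Fin (m + 2), HasLeadingDigit (a (n + (i : ℕ))) (e i))).card : ℝ) / N)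
      atTop (nhds (∏ i : Fin (m + 2), benfordP (e i))) := by
    intro e he
    have := h (m + 2) (by omega) e (hbound e he)
    convert this using 3 with N
    rw [card_setOf_eq]
  have hsum := tendsto_finset_sum F (fun e he => hlim e he)
  convert hsum using 1
  -- final computation of the sum of products
  have hps : ∑ e ∈ F, ∏ i : Fin (m + 2), benfordP (e i) =
      ∏ i : Fin (m + 2), ∑ x ∈ digitSets d m i, benfordP x := by
    rw [hF]
    exact (Finset.prod_univ_sum (digitSets d m) fun _ x => benfordP x).symm
  rw [hps]
  have hval : ∀ i : Fin (m + 2), (∑ x ∈ digitSets d m i, benfordP x) =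
      if (i : ℕ) = 0 ∨ (i : ℕ) = m + 1 then benfordP d else (1 - benfordP d) := by
    intro i
    by_cases hcond : (i : ℕ) = 0 ∨ (i : ℕ) = m + 1
    · rw [if_pos hcond, digitSets_of_cond hcond, Finset.sum_singleton]
    · rw [if_neg hcond, digitSets_of_mid hcond]
      exact benfordP_sum_erase hd1 hd9
  rw [Finset.prod_congr rfl (fun i _ => hval i), Finset.prod_ite, Finset.prod_const,
    Finset.prod_const]
  have hA : (Finset.univ.filter
      (fun i : Fin (m + 2) => (i : ℕ) = 0 ∨ (i : ℕ) = m + 1)).card = 2 := by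
    have heqA : (Finset.univ.filter (fun i : Fin (m + 2) => (i : ℕ) = 0 ∨ (i : ℕ) = m + 1)) =
        {(0 : Fin (m + 2)), (⟨m + 1, by omega⟩ : Fin (m + 2))} := by
      ext i
      simp only [Finset.mem_filter, Finset.mem_univ, true_and, Finset.mem_insert,
        Finset.mem_singleton, Fin.ext_iff, Fin.val_zero]
    rw [heqA, Finset.card_insert_of_notMem (by simp [Fin.ext_iff]), Finset.card_singleton]
  have hB : (Finset.univ.filter
      (fun i : Fin (m + 2) => ¬((i : ℕ) = 0 ∨ (i : ℕ) = m + 1))).card = m := by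
    have h2 := Finset.card_filter_add_card_filter_not
      (s := (Finset.univ : Finset (Fin (m + 2))))
      (p := fun i : Fin (m + 2) => (i : ℕ) = 0 ∨ (i : ℕ) = m + 1)
    rw [hA] at h2
    simp only [Finset.card_univ, Fintype.card_fin] at h2
    omega
  rw [hA, hB]

section Main
variable (a : ℕ → ℝ) (d : ℕ)

open Classical in
lemma S_density (h : ∀ k : ℕ, 1 ≤ k → LocallyBenfordDistributed a k)
    (hd1 : 1 ≤ d) (hd9 : d ≤ 9) :
    Tendsto (fun N : ℕ =>
        (((Finset.Icc 1 N).filter (fun n => HasLeadingDigit (a n) d)).card : ℝ) / N)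
      atTop (nhds (benfordP d)) := by
  classical
  have := h 1 le_rfl (fun _ => d) (fun _ => ⟨hd1, hd9⟩)
  rw [show (∏ _i : Fin 1, benfordP d) = benfordP d by simp] at this
  convert this using 3 with N
  rw [card_setOf_eq]
  norm_cast
  apply Finset.card_bij (fun n _ => n) <;> intro n hn
  · rw [Finset.mem_filter] at hn ⊢
    refine ⟨hn.1, fun i => ?_⟩
    have : (i : ℕ) = 0 := by omega
    rw [this, Nat.add_zero]
    exact hn.2
  · intro n' hn' hh; exact hh
  · rw [Finset.mem_filter] at hn
    refine ⟨n, Finset.mem_filter.2 ⟨hn.1, ?_⟩, rfl⟩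
    have := hn.2 0
    rwa [Fin.val_zero, Nat.add_zero] at this

open Classical in
lemma S_infinite (h : ∀ k : ℕ, 1 ≤ k → LocallyBenfordDistributed a k)
    (hd1 : 1 ≤ d) (hd9 : d ≤ 9) :
    {n : ℕ | 1 ≤ n ∧ HasLeadingDigit (a n) d}.Infinite := by
  classical
  by_contra hinf
  rw [Set.not_infinite] at hinf
  set C : ℕ := hinf.toFinset.card with hC
  have hb : ∀ N : ℕ,
      (((Finset.Icc 1 N).filter (fun n => HasLeadingDigit (a n) d)).card : ℝ) / N
        ≤ (C : ℝ) / N := by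
    intro N
    gcongr
    exact_mod_cast Finset.card_le_card (fun n hn => by
        rw [Set.Finite.mem_toFinset]
        rw [Finset.mem_filter, Finset.mem_Icc] at hn
        exact ⟨hn.1.1, hn.2⟩)
  have h0 : Tendsto (fun N : ℕ =>
      (((Finset.Icc 1 N).filter (fun n => HasLeadingDigit (a n) d)).card : ℝ) / N)
      atTop (nhds 0) := by
    apply squeeze_zero (fun N => by positivity) hb
    exact tendsto_const_div_atTop_nhds_zero_nat (C : ℝ)
  have := tendsto_nhds_unique (S_density a d h hd1 hd9) h0
  have := benfordP_pos hd1
  linarith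

open Classical in
lemma wait_card (hd1 : 1 ≤ d)
    (hinf : {n : ℕ | 1 ≤ n ∧ HasLeadingDigit (a n) d}.Infinite)
    (m : ℕ) {N : ℕ} (hN : 1 ≤ N) :
    ((Finset.Icc 1 N).filter (fun i => waitingTime a d i = m + 1)).card =
      ((Finset.Icc 1 (Nat.nth (fun n => 1 ≤ n ∧ HasLeadingDigit (a n) d) (N - 1))).filter
        (GapProp a d m)).card := by
  classical
  set P : ℕ → Prop := fun n => 1 ≤ n ∧ HasLeadingDigit (a n) d with hP
  have hinf' : (setOf P).Infinite := hinf
  apply Finset.card_bij (fun i _ => Nat.nth P (i - 1))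
  · rintro i hi
    rw [Finset.mem_filter, Finset.mem_Icc] at hi
    obtain ⟨⟨hi1, hiN⟩, hw⟩ := hi
    set n := Nat.nth P (i - 1) with hn
    have hPn : P n := Nat.nth_mem_of_infinite hinf' _
    have hlt : n < Nat.nth P i := (Nat.nth_lt_nth hinf').2 (by omega)
    have heq : Nat.nth P i = n + (m + 1) := by
      rw [waitingTime, ← hP] at hw
      omega
    rw [Finset.mem_filter, Finset.mem_Icc]
    refine ⟨⟨hPn.1, (Nat.nth_le_nth hinf').2 (by omega)⟩, hPn.2, ?_, ?_⟩
    · intro j hj1 hjm hdig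
      have hPj : P (n + j) := ⟨by omega, hdig⟩
      have hlt2 : n + j < Nat.nth P ((i - 1) + 1) := by
        rw [show (i - 1) + 1 = i by omega]
        omega
      have := Nat.le_nth_of_lt_nth_succ hlt2 hPj
      omega
    · have := (Nat.nth_mem_of_infinite hinf' i).2
      rwa [heq] at this
  · intro i hi i' hi' hii
    rw [Finset.mem_filter, Finset.mem_Icc] at hi hi'
    have := Nat.nth_injective hinf' hii
    omega
  · intro n hn
    rw [Finset.mem_filter, Finset.mem_Icc] at hn
    obtain ⟨⟨hn1, hnle⟩, hg1, hg2, hg3⟩ := hn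
    have hPn : P n := ⟨hn1, hg1⟩
    have hPm : P (n + (m + 1)) := ⟨by omega, hg3⟩
    have hcount : ∀ j, j ≤ m → Nat.count P (n + 1 + j) = Nat.count P n + 1 := by
      intro j hj
      induction j with
      | zero =>
        rw [Nat.add_zero, Nat.count_succ, if_pos hPn]
      | succ j ih =>
        have hnj : ¬ P (n + (j + 1)) := fun hc => hg2 (j + 1) (by omega) (by omega) hc.2
        rw [show n + 1 + (j + 1) = (n + (j + 1)) + 1 by omega, Nat.count_succ, if_neg hnj,
          Nat.add_zero, show n + (j + 1) = n + 1 + j by omega, ih (by omega)]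
    have hcm : Nat.count P (n + (m + 1)) = Nat.count P n + 1 := by
      rw [show n + (m + 1) = n + 1 + m by omega]
      exact hcount m le_rfl
    have hnthm : Nat.nth P (Nat.count P n + 1) = n + (m + 1) := by
      rw [← hcm, Nat.nth_count hPm]
    have hnth0 : Nat.nth P (Nat.count P n) = n := Nat.nth_count hPn
    refine ⟨Nat.count P n + 1, ?_, ?_⟩
    · rw [Finset.mem_filter, Finset.mem_Icc]
      have hle : Nat.count P n ≤ N - 1 := (Nat.count_le_iff_le_nth hinf').2 hnle
      refine ⟨⟨by omega, by omega⟩, ?_⟩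
      rw [waitingTime]
      simp only [Nat.add_sub_cancel]
      rw [← hP, hnthm, hnth0]
      omega
    · simp only [Nat.add_sub_cancel]
      exact hnth0

theorem final (hpos : ∀ n : ℕ, 1 ≤ n → 0 < a n)
    (h : ∀ k : ℕ, 1 ≤ k → LocallyBenfordDistributed a k)
    (hd1 : 1 ≤ d) (hd9 : d ≤ 9) (k : ℕ) (hk : 1 ≤ k) :
    Tendsto
      (fun N : ℕ =>
        (Nat.card {i : ℕ | 1 ≤ i ∧ i ≤ N ∧ waitingTime a d i = k} : ℝ) / N)
      atTop (nhds (benfordP d * (1 - benfordP d) ^ (k - 1))) := by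
  classical
  obtain ⟨m, rfl⟩ : ∃ m, k = m + 1 := ⟨k - 1, by omega⟩
  simp only [Nat.add_sub_cancel]
  set P : ℕ → Prop := fun n => 1 ≤ n ∧ HasLeadingDigit (a n) d with hP
  have hinf : (setOf P).Infinite := S_infinite a d h hd1 hd9
  have hp0 : 0 < benfordP d := benfordP_pos hd1
  set M : ℕ → ℕ := fun N => Nat.nth P (N - 1) with hM
  have hMtop : Tendsto M atTop atTop :=
    (Nat.nth_strictMono hinf).tendsto_atTop.comp (tendsto_sub_atTop_nat 1)
  have hM1 : ∀ N, 1 ≤ M N := fun N => (Nat.nth_mem_of_infinite hinf _).1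
  have hcount : ∀ N, 1 ≤ N →
      (((Finset.Icc 1 (M N)).filter (fun n => HasLeadingDigit (a n) d)).card) = N := by
    intro N hN
    have h1 : Nat.count P (M N) = N - 1 := Nat.count_nth_of_infinite hinf _
    have h2 : Nat.count P (M N + 1) = N := by
      rw [Nat.count_succ, if_pos (Nat.nth_mem_of_infinite hinf _), h1]
      omega
    have h3 : ((Finset.Icc 1 (M N)).filter (fun n => HasLeadingDigit (a n) d)).card
        = Nat.count P (M N + 1) := by
      rw [Nat.count_eq_card_filter_range]
      congr 1
      ext n
      simp only [Finset.mem_filter, Finset.mem_range, Finset.mem_Icc, Nat.lt_succ_iff, hP,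
        and_assoc]
      constructor
      · rintro ⟨u1, u2, u3⟩; exact ⟨u2, u1, u3⟩
      · rintro ⟨u1, u2, u3⟩; exact ⟨u2, u1, u3⟩
    rw [h3, h2]
  have hqlim : Tendsto (fun N : ℕ =>
      (((Finset.Icc 1 (M N)).filter (GapProp a d m)).card : ℝ) / (M N)) atTop
      (nhds (benfordP d ^ 2 * (1 - benfordP d) ^ m)) :=
    (gap_density a hpos h hd1 hd9 m).comp hMtop
  have hplim : Tendsto (fun N : ℕ =>
      ((((Finset.Icc 1 (M N)).filter (fun n => HasLeadingDigit (a n) d)).card : ℝ) / (M N))⁻¹)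
      atTop (nhds (benfordP d)⁻¹) :=
    ((S_density a d h hd1 hd9).comp hMtop).inv₀ hp0.ne'
  have hprod := hqlim.mul hplim
  have hval : benfordP d ^ 2 * (1 - benfordP d) ^ m * (benfordP d)⁻¹ =
      benfordP d * (1 - benfordP d) ^ m := by
    field_simp
  rw [hval] at hprod
  apply hprod.congr'
  filter_upwards [eventually_ge_atTop 1] with N hN
  rw [card_setOf_eq, wait_card a d hd1 hinf m hN]
  rw [hcount N hN]
  have hMne : ((M N : ℝ)) ≠ 0 := by
    have := hM1 N; positivity
  have hNne : ((N : ℝ)) ≠ 0 := by positivity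
  rw [inv_div]
  field_simp
  rfl

end Main

/-- A sequence that is locally Benford distributed of every order has Benford
distributed waiting times. -/
theorem benfordWaitingTimes_of_locallyBenford (a : ℕ → ℝ)
    (hpos : ∀ n : ℕ, 1 ≤ n → 0 < a n)
    (h : ∀ k : ℕ, 1 ≤ k → LocallyBenfordDistributed a k) :
    BenfordWaitingTimes a := by
  intro d hd1 hd9 k hk
  exact final a d hpos h hd1 hd9 k hk
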